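/- Let ξ, ξ' be elements of the lattice with nonnegative coefficients, ξ = Σ n_i H_i, ξ' = Σ n'_i H_i, and let g_i^ξ = ⊕_{α(ξ)=√-1·i} g_α be the ad(ξ)-eigenspace decomposition, with p_i^ξ = ⊕_{j≤i} g_j^ξ. Then p_i^ξ ⊆ p_i^{ξ'} for all i ≥ 0 if and only if n'_j ≤ n_j for all j. -/
import Mathlib


open Finset

/-- let the roots be recorded by their integer coordinates `m : Fin k → ℤ` in
the basis of simple roots (so `α(ξ) = √-1 Σ m_a n_a` for `ξ = Σ n_a H_a`), with every root
positive or negative, and with all the simple roots among them.  For `ξ = Σ n_a H_a`,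
`ξ' = Σ n'_a H_a` with nonnegative coefficients, the condition `p_i^ξ ⊆ p_i^{ξ'}` for all
`i ≥ 0` — i.e. every root `α` with `α(ξ)`-height `≤ i` also has `α(ξ')`-height `≤ i` — holds
iff `n'_a ≤ n_a` for all `a`. -/
theorem statement12 (k : ℕ) (Δ : Finset (Fin k → ℤ))
    (hroots : ∀ m ∈ Δ, (∀ a, 0 ≤ m a) ∨ (∀ a, m a ≤ 0))
    (hsimple : ∀ j : Fin k, (fun a => if a = j then (1 : ℤ) else 0) ∈ Δ)
    (c c' : Fin k → ℤ) (hc : ∀ a, 0 ≤ c a) (hc' : ∀ a, 0 ≤ c' a) :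
    (∀ i : ℤ, 0 ≤ i → ∀ m ∈ Δ, (∑ a, m a * c a) ≤ i → (∑ a, m a * c' a) ≤ i)
      ↔ ∀ a, c' a ≤ c a := by
  constructor
  · intro h j
    have h1 : (∑ a, (if a = j then (1:ℤ) else 0) * c a) = c j := by
      simp [ite_mul]
    have h2 : (∑ a, (if a = j then (1:ℤ) else 0) * c' a) = c' j := by
      simp [ite_mul]
    have := h (c j) (hc j) _ (hsimple j) (by rw [h1])
    rwa [h2] at this
  · intro h i hi m hm hmc
    rcases hroots m hm with hp | hn
    · calc (∑ a, m a * c' a) ≤ ∑ a, m a * c a := by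
            apply Finset.sum_le_sum
            intro a _
            exact mul_le_mul_of_nonneg_left (h a) (hp a)
          _ ≤ i := hmc
    · calc (∑ a, m a * c' a) ≤ ∑ a, (0:ℤ) := by
            apply Finset.sum_le_sum
            intro a _
            exact mul_nonpos_of_nonpos_of_nonneg (hn a) (hc' a)
          _ = 0 := by simp
          _ ≤ i := hi
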